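/- For X, Y ∈ ℝ^{d×r} with XᵀX and YᵀY invertible, and any V ∈ ℝ^{d×r} with 2‖Y−X‖_X* < 1, the local dual norms satisfy (‖V‖_X*)²/(1 + 2‖Y−X‖_X* + (‖Y−X‖_X*)²) ≤ (‖V‖_Y*)² ≤ (‖V‖_X*)²/(1 − 2‖Y−X‖_X*). -/

import Mathlib

open Matrix BigOperators

noncomputable section

/-- Frobenius norm of a real matrix. -/
def frob {m n : ℕ} (A : Matrix (Fin m) (Fin n) ℝ) : ℝ :=
  Real.sqrt (∑ i, ∑ j, (A i j) ^ 2)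

/-- Trace inner product `⟨A,B⟩ = tr(AᵀB)`. -/
def mip {m n : ℕ} (A B : Matrix (Fin m) (Fin n) ℝ) : ℝ := (Aᵀ * B).trace

open Classical in
/-- Smallest eigenvalue of a Hermitian matrix (junk value 0 otherwise). -/
def lammin {n : ℕ} (M : Matrix (Fin n) (Fin n) ℝ) : ℝ :=
  if h : M.IsHermitian then ⨅ i, h.eigenvalues i else 0

/-- The square root of a positive semidefinite matrix, as `Matrix.PosSemidef.sqrt` was defined
in the older Mathlib (that declaration has since been removed). -/
def psdSqrt {n : ℕ} {A : Matrix (Fin n) (Fin n) ℝ} (hA : A.PosSemidef) : Matrix (Fin n) (Fin n) ℝ :=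
  hA.1.eigenvectorUnitary.1 * diagonal ((↑) ∘ (√·) ∘ hA.1.eigenvalues) *
    (star hA.1.eigenvectorUnitary : Matrix (Fin n) (Fin n) ℝ)

/-- Local norm `‖V‖_X = ‖V (XᵀX)^{1/2}‖_F`. -/
def locNorm {d r : ℕ} (X V : Matrix (Fin d) (Fin r) ℝ) : ℝ :=
  frob (V * psdSqrt (Matrix.posSemidef_conjTranspose_mul_self X))

/-- Dual local norm `‖V‖_X* = ‖V (XᵀX)^{-1/2}‖_F`. -/
def dualNorm {d r : ℕ} (X V : Matrix (Fin d) (Fin r) ℝ) : ℝ :=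
  frob (V * (psdSqrt (Matrix.posSemidef_conjTranspose_mul_self X))⁻¹)

/-- Leverage score / coherence `g_k(X) = e_kᵀ X (XᵀX)⁻¹ Xᵀ e_k`. -/
def lev {d r : ℕ} (k : Fin d) (X : Matrix (Fin d) (Fin r) ℝ) : ℝ :=
  (X * (Xᴴ * X)⁻¹ * Xᴴ) k k

/-- Gradient of the leverage score `∇g_k(X)`. -/
def levGrad {d r : ℕ} (k : Fin d) (X : Matrix (Fin d) (Fin r) ℝ) :
    Matrix (Fin d) (Fin r) ℝ :=
  (2 : ℝ) • ((1 - X * (Xᴴ * X)⁻¹ * Xᴴ) * Matrix.single k k (1 : ℝ) * X * (Xᴴ * X)⁻¹)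

/-- Stochastic gradient sample `SG(X)` for the index pair `(i,j)`. -/
def SG {d r : ℕ} (X Z : Matrix (Fin d) (Fin r) ℝ) (i j : Fin d) :
    Matrix (Fin d) (Fin r) ℝ :=
  (2 * (d : ℝ) ^ 2 * ((X * Xᴴ - Z * Zᴴ) i j)) •
    ((Matrix.single i j (1 : ℝ) + Matrix.single j i (1 : ℝ)) * X)

namespace CoN
open Matrix

lemma frob_sq {m n : ℕ} (A : Matrix (Fin m) (Fin n) ℝ) :
    frob A ^ 2 = ∑ i, ∑ j, (A i j) ^ 2 := by
  apply Real.sq_sqrt; positivity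

lemma dot_mulVec_symm {n : ℕ} {P : Matrix (Fin n) (Fin n) ℝ} (hP : Pᵀ = P)
    (u v : Fin n → ℝ) : u ⬝ᵥ (P *ᵥ v) = v ⬝ᵥ (P *ᵥ u) := by
  rw [Matrix.dotProduct_mulVec, ← Matrix.vecMul_transpose, hP, dotProduct_comm]

lemma quad_eq {m n : ℕ} (X : Matrix (Fin m) (Fin n) ℝ) (v : Fin n → ℝ) :
    v ⬝ᵥ ((Xᵀ * X) *ᵥ v) = (X *ᵥ v) ⬝ᵥ (X *ᵥ v) := by
  rw [← Matrix.mulVec_mulVec, Matrix.dotProduct_mulVec, Matrix.vecMul_transpose]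

lemma mulVec_dot_le {m n : ℕ} (M : Matrix (Fin m) (Fin n) ℝ) (w : Fin n → ℝ) :
    (M *ᵥ w) ⬝ᵥ (M *ᵥ w) ≤ (∑ i, ∑ j, (M i j) ^ 2) * (w ⬝ᵥ w) := by
  simp only [dotProduct, Matrix.mulVec, dotProduct]
  rw [Finset.sum_mul]
  apply Finset.sum_le_sum
  intro i _
  calc (∑ j, M i j * w j) * (∑ j, M i j * w j) = (∑ j, M i j * w j) ^ 2 := (sq _).symm
    _ ≤ (∑ j, (M i j) ^ 2) * (∑ j, (w j) ^ 2) := Finset.sum_mul_sq_le_sq_mul_sq _ _ _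
    _ = (∑ j, (M i j) ^ 2) * (∑ j, w j * w j) := by simp [sq]

lemma inv_quad_le {n : ℕ} {P Q : Matrix (Fin n) (Fin n) ℝ} {c : ℝ}
    (hPs : Pᵀ = P) (hPd : IsUnit P.det) (hQd : IsUnit Q.det)
    (hPpsd : ∀ w, 0 ≤ w ⬝ᵥ (P *ᵥ w)) (hc : 0 < c)
    (hdom : ∀ w, c * (w ⬝ᵥ (P *ᵥ w)) ≤ w ⬝ᵥ (Q *ᵥ w)) (v : Fin n → ℝ) :
    v ⬝ᵥ (Q⁻¹ *ᵥ v) ≤ c⁻¹ * (v ⬝ᵥ (P⁻¹ *ᵥ v)) := by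
  set u := Q⁻¹ *ᵥ v with hu
  set z := P⁻¹ *ᵥ v with hz
  have hQu : Q *ᵥ u = v := by
    rw [hu, Matrix.mulVec_mulVec, Matrix.mul_nonsing_inv _ hQd, Matrix.one_mulVec]
  have hPz : P *ᵥ z = v := by
    rw [hz, Matrix.mulVec_mulVec, Matrix.mul_nonsing_inv _ hPd, Matrix.one_mulVec]
  have key : 0 ≤ (u - c⁻¹ • z) ⬝ᵥ (P *ᵥ (u - c⁻¹ • z)) := hPpsd _
  have expand : (u - c⁻¹ • z) ⬝ᵥ (P *ᵥ (u - c⁻¹ • z))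
      = u ⬝ᵥ (P *ᵥ u) - 2 * c⁻¹ * (u ⬝ᵥ v) + c⁻¹ * c⁻¹ * (v ⬝ᵥ z) := by
    have hsz : z ⬝ᵥ (P *ᵥ u) = u ⬝ᵥ v := by
      rw [dot_mulVec_symm hPs, hPz, dotProduct_comm]
    have hzz : z ⬝ᵥ (P *ᵥ z) = v ⬝ᵥ z := by
      rw [dot_mulVec_symm hPs, hPz, dotProduct_comm]
    have huz : u ⬝ᵥ (P *ᵥ z) = u ⬝ᵥ v := by rw [hPz]
    simp only [Matrix.mulVec_sub, Matrix.mulVec_smul, sub_dotProduct, dotProduct_sub,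
      smul_dotProduct, dotProduct_smul, smul_eq_mul]
    rw [huz, hsz, hzz]
    ring
  have hqu : u ⬝ᵥ (Q *ᵥ u) = u ⬝ᵥ v := by rw [hQu]
  have h2 : c * (u ⬝ᵥ (P *ᵥ u)) ≤ u ⬝ᵥ v := by rw [← hqu]; exact hdom u
  have key2 : 0 ≤ u ⬝ᵥ (P *ᵥ u) - 2 * c⁻¹ * (u ⬝ᵥ v) + c⁻¹ * c⁻¹ * (v ⬝ᵥ z) := by
    rw [← expand]; exact key
  have key3 : 0 ≤ c * (u ⬝ᵥ (P *ᵥ u)) - 2 * (u ⬝ᵥ v) + c⁻¹ * (v ⬝ᵥ z) := by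
    have h4 := mul_le_mul_of_nonneg_left key2 hc.le
    rw [mul_zero] at h4
    have h5 : c * (u ⬝ᵥ (P *ᵥ u) - 2 * c⁻¹ * (u ⬝ᵥ v) + c⁻¹ * c⁻¹ * (v ⬝ᵥ z))
        = c * (u ⬝ᵥ (P *ᵥ u)) - 2 * (u ⬝ᵥ v) + c⁻¹ * (v ⬝ᵥ z) := by
      field_simp
    rw [h5] at h4
    exact h4
  have h1 : v ⬝ᵥ u = u ⬝ᵥ v := dotProduct_comm _ _
  linarith

variable {d r : ℕ}

lemma conj_eq (X : Matrix (Fin d) (Fin r) ℝ) : Xᴴ = Xᵀ :=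
  Matrix.conjTranspose_eq_transpose_of_trivial X

lemma psdSqrt_facts {n : ℕ} {M : Matrix (Fin n) (Fin n) ℝ} (hM : M.PosSemidef) :
    (psdSqrt hM)ᴴ = psdSqrt hM ∧ psdSqrt hM * psdSqrt hM = M := by
  have hU : (star hM.1.eigenvectorUnitary : Matrix (Fin n) (Fin n) ℝ) *
      hM.1.eigenvectorUnitary.1 = 1 := Unitary.coe_star_mul_self _
  constructor
  · rw [psdSqrt, conjTranspose_mul, conjTranspose_mul]
    simp [Matrix.mul_assoc, star_eq_conjTranspose]
  · have hspec := hM.1.spectral_theorem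
    rw [Unitary.conjStarAlgAut_apply] at hspec
    conv_rhs => rw [hspec]
    unfold psdSqrt
    simp only [Matrix.mul_assoc]
    rw [← Matrix.mul_assoc (star (hM.1.eigenvectorUnitary : Matrix (Fin n) (Fin n) ℝ)),
      hU, Matrix.one_mul, ← Matrix.mul_assoc (diagonal _), diagonal_mul_diagonal]
    congr 2
    congr 1
    funext i
    simp [Real.mul_self_sqrt (hM.eigenvalues_nonneg i)]

-- facts about the square root of XᵀX
lemma sqrt_facts (X : Matrix (Fin d) (Fin r) ℝ) (hX : IsUnit (Xᴴ * X).det) :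
    let A := psdSqrt (Matrix.posSemidef_conjTranspose_mul_self X)
    Aᵀ = A ∧ A * A = Xᴴ * X ∧ IsUnit A.det := by
  intro A
  have hP := Matrix.posSemidef_conjTranspose_mul_self X
  have hAH : Aᴴ = A := (psdSqrt_facts hP).1
  have hAt : Aᵀ = A := by rw [← Matrix.conjTranspose_eq_transpose_of_trivial]; exact hAH
  have hAA : A * A = Xᴴ * X := (psdSqrt_facts hP).2
  refine ⟨hAt, hAA, ?_⟩
  have : IsUnit (A.det * A.det) := by
    rw [← Matrix.det_mul, hAA]; exact hX
  exact isUnit_of_mul_isUnit_left this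

lemma row_mul (V : Matrix (Fin d) (Fin r) ℝ) (M : Matrix (Fin r) (Fin r) ℝ) (i : Fin d) :
    (V * M) i = Mᵀ *ᵥ (V i) := by
  funext j
  simp [Matrix.mul_apply, Matrix.mulVec, dotProduct, mul_comm]

lemma dualNorm_sq (X V : Matrix (Fin d) (Fin r) ℝ) (hX : IsUnit (Xᴴ * X).det) :
    dualNorm X V ^ 2 = ∑ i, (V i) ⬝ᵥ ((Xᴴ * X)⁻¹ *ᵥ (V i)) := by
  obtain ⟨hAt, hAA, hAd⟩ := sqrt_facts X hX
  set A := psdSqrt (Matrix.posSemidef_conjTranspose_mul_self X) with hA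
  have hAinvT : (A⁻¹)ᵀ = A⁻¹ := by rw [Matrix.transpose_nonsing_inv, hAt]
  have hinv : (Xᴴ * X)⁻¹ = (A⁻¹)ᵀ * A⁻¹ := by
    rw [hAinvT, ← hAA, Matrix.mul_inv_rev]
  rw [dualNorm, frob_sq]
  apply Finset.sum_congr rfl
  intro i _
  rw [hinv, quad_eq]
  have hrow : (V * A⁻¹) i = A⁻¹ *ᵥ (V i) := by rw [row_mul, hAinvT]
  rw [hrow]
  simp [dotProduct, sq]

lemma dot_self_nonneg {n : ℕ} (w : Fin n → ℝ) : 0 ≤ w ⬝ᵥ w :=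
  Finset.sum_nonneg fun _ _ => mul_self_nonneg _

lemma sandwich (X Y : Matrix (Fin d) (Fin r) ℝ) (hX : IsUnit (Xᴴ * X).det)
    (v : Fin r → ℝ) :
    (1 - 2 * dualNorm X (Y - X)) * (v ⬝ᵥ ((Xᴴ * X) *ᵥ v)) ≤ v ⬝ᵥ ((Yᴴ * Y) *ᵥ v)
      ∧ v ⬝ᵥ ((Yᴴ * Y) *ᵥ v)
        ≤ (1 + 2 * dualNorm X (Y - X) + dualNorm X (Y - X) ^ 2)
            * (v ⬝ᵥ ((Xᴴ * X) *ᵥ v)) := by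
  obtain ⟨hAt, hAA, hAd⟩ := sqrt_facts X hX
  set A := psdSqrt (Matrix.posSemidef_conjTranspose_mul_self X) with hA
  set ε := dualNorm X (Y - X) with hε
  set E := Y - X with hE
  set x := X *ᵥ v with hx
  set e := E *ᵥ v with he
  have hεnn : 0 ≤ ε := by rw [hε, dualNorm, frob]; exact Real.sqrt_nonneg _
  have hε2 : ε ^ 2 = ∑ i, ∑ j, ((E * A⁻¹) i j) ^ 2 := frob_sq _
  have hxq : v ⬝ᵥ ((Xᴴ * X) *ᵥ v) = x ⬝ᵥ x := by rw [conj_eq, quad_eq]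
  have haa : (A *ᵥ v) ⬝ᵥ (A *ᵥ v) = x ⬝ᵥ x := by
    calc (A *ᵥ v) ⬝ᵥ (A *ᵥ v) = v ⬝ᵥ ((Aᵀ * A) *ᵥ v) := (quad_eq A v).symm
      _ = v ⬝ᵥ ((A * A) *ᵥ v) := by rw [hAt]
      _ = x ⬝ᵥ x := by rw [hAA, hxq]
  have hee : e = (E * A⁻¹) *ᵥ (A *ᵥ v) := by
    rw [Matrix.mulVec_mulVec, Matrix.mul_assoc, Matrix.nonsing_inv_mul _ hAd,
      Matrix.mul_one, he]
  have heb : e ⬝ᵥ e ≤ ε ^ 2 * (x ⬝ᵥ x) := by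
    rw [hee, hε2]
    calc ((E * A⁻¹) *ᵥ (A *ᵥ v)) ⬝ᵥ ((E * A⁻¹) *ᵥ (A *ᵥ v))
        ≤ (∑ i, ∑ j, ((E * A⁻¹) i j) ^ 2) * ((A *ᵥ v) ⬝ᵥ (A *ᵥ v)) := mulVec_dot_le _ _
      _ = (∑ i, ∑ j, ((E * A⁻¹) i j) ^ 2) * (x ⬝ᵥ x) := by rw [haa]
  have hyv : Y *ᵥ v = x + e := by
    have hXY : X + (Y - X) = Y := by abel
    rw [hx, he, hE, ← Matrix.add_mulVec, hXY]
  have hyq : v ⬝ᵥ ((Yᴴ * Y) *ᵥ v) = x ⬝ᵥ x + 2 * (x ⬝ᵥ e) + e ⬝ᵥ e := by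
    rw [conj_eq, quad_eq, hyv]
    simp only [dotProduct_add, add_dotProduct]
    rw [dotProduct_comm e x]
    ring
  have hcs : (x ⬝ᵥ e) ^ 2 ≤ (x ⬝ᵥ x) * (e ⬝ᵥ e) := by
    simp only [dotProduct]
    have := Finset.sum_mul_sq_le_sq_mul_sq Finset.univ x e
    calc (∑ j, x j * e j) ^ 2 ≤ (∑ j, (x j) ^ 2) * (∑ j, (e j) ^ 2) := this
      _ = (∑ j, x j * x j) * (∑ j, e j * e j) := by simp [sq]
  have hxx : 0 ≤ x ⬝ᵥ x := dot_self_nonneg x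
  have hcross : |x ⬝ᵥ e| ≤ ε * (x ⬝ᵥ x) := by
    have h1 : (x ⬝ᵥ e) ^ 2 ≤ (ε * (x ⬝ᵥ x)) ^ 2 := by
      calc (x ⬝ᵥ e) ^ 2 ≤ (x ⬝ᵥ x) * (e ⬝ᵥ e) := hcs
        _ ≤ (x ⬝ᵥ x) * (ε ^ 2 * (x ⬝ᵥ x)) := mul_le_mul_of_nonneg_left heb hxx
        _ = (ε * (x ⬝ᵥ x)) ^ 2 := by ring
    have h2 : 0 ≤ ε * (x ⬝ᵥ x) := mul_nonneg hεnn hxx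
    exact abs_le_of_sq_le_sq h1 h2
  have henn : 0 ≤ e ⬝ᵥ e := dot_self_nonneg e
  rw [hxq, hyq]
  rw [abs_le] at hcross
  constructor
  · linarith
  · linarith

end CoN

namespace CoN
open Matrix

lemma Pt (X : Matrix (Fin d) (Fin r) ℝ) : (Xᴴ * X)ᵀ = Xᴴ * X := by
  rw [conj_eq, Matrix.transpose_mul, Matrix.transpose_transpose]

lemma Ppsd (X : Matrix (Fin d) (Fin r) ℝ) (w : Fin r → ℝ) :
    0 ≤ w ⬝ᵥ ((Xᴴ * X) *ᵥ w) := by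
  rw [conj_eq, quad_eq]; exact dot_self_nonneg _

end CoN


open CoN in
/-- Change-of-basepoint lemma for the dual local norm. -/
theorem change_of_norm {d r : ℕ} (X Y V : Matrix (Fin d) (Fin r) ℝ)
    (hX : IsUnit (Xᴴ * X).det) (hY : IsUnit (Yᴴ * Y).det)
    (h : 2 * dualNorm X (Y - X) < 1) :
    dualNorm X V ^ 2 / (1 + 2 * dualNorm X (Y - X) + dualNorm X (Y - X) ^ 2)
        ≤ dualNorm Y V ^ 2
      ∧ dualNorm Y V ^ 2 ≤ dualNorm X V ^ 2 / (1 - 2 * dualNorm X (Y - X)) := by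
  set ε := dualNorm X (Y - X) with hε
  have hεnn : 0 ≤ ε := by rw [hε, dualNorm, frob]; exact Real.sqrt_nonneg _
  have hc1 : 0 < 1 - 2 * ε := by linarith
  have hc2 : 0 < 1 + 2 * ε + ε ^ 2 := by positivity
  have hQX := dualNorm_sq X V hX
  have hQY := dualNorm_sq Y V hY
  -- right inequality
  have hright : dualNorm Y V ^ 2 ≤ (1 - 2 * ε)⁻¹ * dualNorm X V ^ 2 := by
    rw [hQX, hQY, Finset.mul_sum]
    apply Finset.sum_le_sum
    intro i _
    exact inv_quad_le (Pt X) hX hY (Ppsd X) hc1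
      (fun w => (sandwich X Y hX w).1) (V i)
  -- left inequality
  have hleft : dualNorm X V ^ 2 ≤ (1 + 2 * ε + ε ^ 2) * dualNorm Y V ^ 2 := by
    rw [hQX, hQY, Finset.mul_sum]
    apply Finset.sum_le_sum
    intro i _
    have := inv_quad_le (Pt Y) hY hX (Ppsd Y) (c := (1 + 2 * ε + ε ^ 2)⁻¹)
      (by positivity)
      (fun w => by
        have h2 := (sandwich X Y hX w).2
        rw [inv_mul_le_iff₀ hc2]
        exact h2) (V i)
    rwa [inv_inv] at this
  constructor
  · rw [div_le_iff₀ hc2]; linarith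
  · rw [le_div_iff₀ hc1]
    have := mul_le_mul_of_nonneg_left hright hc1.le
    calc dualNorm Y V ^ 2 * (1 - 2 * ε) = (1 - 2 * ε) * dualNorm Y V ^ 2 := by ring
      _ ≤ (1 - 2 * ε) * ((1 - 2 * ε)⁻¹ * dualNorm X V ^ 2) := this
      _ = dualNorm X V ^ 2 := by field_simp
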